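/- Let E ⊂ R^d be measurable and δ > 0 be such that B_δ(−δ e_d) ⊆ E and B_δ(δ e_d) ⊆ R^d \ E. Then for every s ∈ [0,1) and every η > 0, the principal value lim_{r→0+} ∫_{B_η \ B_r} (χ_{R^d\E}(y) − χ_E(y))/|y|^{d+s} dy exists and equals ∫_{B_η \ (B_δ(−δe_d) ∪ B_δ(δe_d))} (χ_{R^d\E}(y) − χ_E(y))/|y|^{d+s} dy. -/

import Mathlib

open MeasureTheory Metric Filter Set
open scoped RealInnerProductSpace Topology

/-- Volume of the unit ball in `ℝ^d` (the constant `ω_d`). -/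
noncomputable def unitBallVol (d : ℕ) : ℝ :=
  (volume (Metric.ball (0 : EuclideanSpace ℝ (Fin d)) 1)).toReal

/-- `χ_{ℝ^d ∖ E}(y) - χ_E(y)`. -/
noncomputable def chiDiff {d : ℕ} (E : Set (EuclideanSpace ℝ (Fin d)))
    (y : EuclideanSpace ℝ (Fin d)) : ℝ :=
  Set.indicator Eᶜ (fun _ => (1:ℝ)) y - Set.indicator E (fun _ => (1:ℝ)) y

/-- The unit vector `e_d` (last coordinate direction) in `ℝ^d`. -/
noncomputable def ed (d : ℕ) : EuclideanSpace ℝ (Fin d) :=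
  if h : 0 < d then EuclideanSpace.single (⟨d - 1, by omega⟩ : Fin d) 1 else 0

/-- `H` is the value of the `s`-fractional curvature of `E` at `x`, defined as the
principal value `lim_{r→0⁺} ∫_{ℝ^d ∖ B_r(x)} (χ_{Eᶜ}(y) - χ_E(y))/|x-y|^{d+s} dy`. -/
def HasFracCurv {d : ℕ} (s : ℝ) (E : Set (EuclideanSpace ℝ (Fin d)))
    (x : EuclideanSpace ℝ (Fin d)) (H : ℝ) : Prop :=
  Tendsto (fun r : ℝ => ∫ y in (Metric.ball x r)ᶜ, chiDiff E y / ‖y - x‖ ^ ((d:ℝ) + s))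
    (nhdsWithin 0 (Set.Ioi 0)) (nhds H)

/-- Uniform two-sided (interior and exterior) tangent ball condition: the standard
geometric characterization of a set with compact boundary of class `C^{1,1}`. -/
def TwoSidedBallCond {d : ℕ} (E : Set (EuclideanSpace ℝ (Fin d))) : Prop :=
  ∃ δ > 0, ∀ x ∈ frontier E, ∃ ν : EuclideanSpace ℝ (Fin d), ‖ν‖ = 1 ∧
    Metric.ball (x - δ • ν) δ ⊆ E ∧ Metric.ball (x + δ • ν) δ ⊆ Eᶜ

/-- The `0`-fractional curvature `H^0(x,E)`, defined with the cutoff radius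
`R = diam E + 1 > diam E` (the value is independent of the choice of `R > diam E`). -/
noncomputable def H0 {d : ℕ} (E : Set (EuclideanSpace ℝ (Fin d)))
    (x : EuclideanSpace ℝ (Fin d)) : ℝ :=
  limUnder (nhdsWithin (0:ℝ) (Set.Ioi 0))
    (fun r => ∫ y in Metric.ball x (Metric.diam E + 1) \ Metric.ball x r,
      chiDiff E y / ‖y - x‖ ^ (d:ℝ))
  - d * unitBallVol d * Real.log (Metric.diam E + 1)

/-- The `s`-Riesz curvature `K^s(x,E) = -2 ∫_E |x-y|^{-(d+s)} dy` of a compact set. -/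
noncomputable def Ks {d : ℕ} (s : ℝ) (E : Set (EuclideanSpace ℝ (Fin d)))
    (x : EuclideanSpace ℝ (Fin d)) : ℝ :=
  -2 * ∫ y in E, 1 / ‖x - y‖ ^ ((d:ℝ) + s)

/-- Outer Minkowski curvature `κ_r^{ou}(x,E)` relative to a normal (vector) field `ν`. -/
noncomputable def kappaOut {d : ℕ} (E : Set (EuclideanSpace ℝ (Fin d)))
    (ν : EuclideanSpace ℝ (Fin d) → EuclideanSpace ℝ (Fin d)) (r : ℝ)
    (x : EuclideanSpace ℝ (Fin d)) : ℝ :=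
  if Metric.infDist (x + r • ν x) E = r then
    (1 / (2 * r)) * LinearMap.det
      ((ContinuousLinearMap.id ℝ (EuclideanSpace ℝ (Fin d)) + r • fderiv ℝ ν x).toLinearMap)
  else 0

/-- Inner Minkowski curvature `κ_r^{in}(x,E)` relative to a normal (vector) field `ν`. -/
noncomputable def kappaIn {d : ℕ} (E : Set (EuclideanSpace ℝ (Fin d)))
    (ν : EuclideanSpace ℝ (Fin d) → EuclideanSpace ℝ (Fin d)) (r : ℝ)
    (x : EuclideanSpace ℝ (Fin d)) : ℝ :=
  if Metric.infDist (x - r • ν x) Eᶜ = r then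
    -(1 / (2 * r)) * LinearMap.det
      ((ContinuousLinearMap.id ℝ (EuclideanSpace ℝ (Fin d)) - r • fderiv ℝ ν x).toLinearMap)
  else 0

/-- Regularized Minkowski curvature `κ_r^f(x,E) = ∫_0^1 (-s f'(s)) κ_{rs}(x,E) ds`. -/
noncomputable def kappaF {d : ℕ} (f : ℝ → ℝ) (E : Set (EuclideanSpace ℝ (Fin d)))
    (ν : EuclideanSpace ℝ (Fin d) → EuclideanSpace ℝ (Fin d)) (r : ℝ)
    (x : EuclideanSpace ℝ (Fin d)) : ℝ :=
  ∫ t in Set.Ioc (0:ℝ) 1, (-t * deriv f t) * (kappaOut E ν (r*t) x + kappaIn E ν (r*t) x)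

lemma ed_eq {d : ℕ} (hd : 0 < d) : ed d = EuclideanSpace.single (⟨d - 1, by omega⟩ : Fin d) 1 := by
  simp [ed, hd]

lemma norm_ed {d : ℕ} (hd : 0 < d) : ‖ed d‖ = 1 := by
  rw [ed_eq hd]; simp

lemma volume_box {d : ℕ} (c : Fin d → ℝ) :
    volume {y : EuclideanSpace ℝ (Fin d) | ∀ i, |y i| ≤ c i}
      = ∏ i, ENNReal.ofReal (2 * c i) := by
  have h : {y : EuclideanSpace ℝ (Fin d) | ∀ i, |y i| ≤ c i}
      = (MeasurableEquiv.toLp 2 (Fin d → ℝ)).symm ⁻¹'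
        (Set.univ.pi fun i => Set.Icc (-(c i)) (c i)) := by
    ext y
    simp only [Set.mem_setOf_eq, Set.mem_preimage, Set.mem_pi, Set.mem_univ, forall_true_left,
      Set.mem_Icc, abs_le]
    exact Iff.rfl
  rw [h, (EuclideanSpace.volume_preserving_symm_measurableEquiv_toLp (Fin d)).measure_preimage
    ((MeasurableSet.univ_pi fun i => measurableSet_Icc).nullMeasurableSet),
    volume_pi_pi]
  congr 1; ext i; rw [Real.volume_Icc]; congr 1; ring

lemma coord_bound {d : ℕ} (hd : 0 < d) {δ : ℝ} (hδ : 0 < δ)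
    {y : EuclideanSpace ℝ (Fin d)}
    (h1 : y ∉ Metric.ball (-(δ • ed d)) δ) (h2 : y ∉ Metric.ball (δ • ed d) δ) :
    |y ⟨d - 1, by omega⟩| ≤ ‖y‖ ^ 2 / (2 * δ) := by
  have he : ‖ed d‖ = 1 := norm_ed hd
  have hip : ⟪y, ed d⟫ = y ⟨d - 1, by omega⟩ := by
    rw [ed_eq hd]
    simpa using EuclideanSpace.inner_single_right (𝕜 := ℝ) _ 1 y
  have key : ∀ z : EuclideanSpace ℝ (Fin d), y ∉ Metric.ball z δ →
      2 * ⟪y, z⟫ ≤ ‖y‖ ^ 2 + ‖z‖ ^ 2 - δ ^ 2 := by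
    intro z hz
    have : δ ≤ ‖y - z‖ := by
      simpa [Metric.mem_ball, dist_eq_norm, not_lt] using hz
    have h2 : δ ^ 2 ≤ ‖y - z‖ ^ 2 := by
      have := norm_nonneg (y - z); nlinarith
    rw [norm_sub_sq_real] at h2
    linarith
  have kp := key _ h2
  have km := key _ h1
  rw [norm_smul, he] at kp
  rw [norm_neg, norm_smul, he] at km
  rw [real_inner_smul_right, hip] at kp
  rw [inner_neg_right, real_inner_smul_right, hip] at km
  have hnd : ‖δ‖ = δ := by rw [Real.norm_eq_abs, abs_of_pos hδ]
  rw [hnd] at kp km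
  have h2δ : (0:ℝ) < 2*δ := by positivity
  rw [abs_le]
  constructor
  · have h := (le_div_iff₀ h2δ).2 (show -(y ⟨d - 1, by omega⟩) * (2*δ) ≤ ‖y‖^2 by nlinarith)
    linarith
  · rw [le_div_iff₀ h2δ]
    nlinarith

lemma measurable_invnorm {d : ℕ} (p : ℝ) :
    Measurable (fun y : EuclideanSpace ℝ (Fin d) => (‖y‖ ^ p)⁻¹) :=
  (measurable_norm.pow_const p).inv

lemma abs_coord_le {d : ℕ} (y : EuclideanSpace ℝ (Fin d)) (i : Fin d) : |y i| ≤ ‖y‖ := by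
  have h := abs_real_inner_le_norm y (EuclideanSpace.single i (1:ℝ))
  rw [EuclideanSpace.norm_single] at h
  have h2 : ⟪y, EuclideanSpace.single i (1:ℝ)⟫ = y i := by
    simpa using EuclideanSpace.inner_single_right (𝕜 := ℝ) i 1 y
  simpa [h2] using h

lemma integrableOn_outside {d : ℕ} (hd : 0 < d) {δ η s : ℝ} (hδ : 0 < δ) (hη : 0 < η)
    (hs : s ∈ Set.Ico (0:ℝ) 1) :
    IntegrableOn (fun y : EuclideanSpace ℝ (Fin d) => (‖y‖ ^ ((d:ℝ) + s))⁻¹)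
      (Metric.ball 0 η \ (Metric.ball (-(δ • ed d)) δ ∪ Metric.ball (δ • ed d) δ)) := by
  have hnt : Nontrivial (EuclideanSpace ℝ (Fin d)) := by
    refine ⟨⟨0, ed d, fun h => ?_⟩⟩
    have := norm_ed hd
    rw [← h] at this; simp at this
  set p : ℝ := (d:ℝ) + s with hp
  have hp0 : 0 < p := by
    have h1 : (1:ℝ) ≤ (d:ℝ) := by exact_mod_cast hd
    have := hs.1; simp only [hp]; linarith
  set U := Metric.ball (-(δ • ed d)) δ ∪ Metric.ball (δ • ed d) δ with hU
  set δ₀ := min δ η with hδ₀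
  have hδ₀p : 0 < δ₀ := lt_min hδ hη
  set f : EuclideanSpace ℝ (Fin d) → ℝ := fun y => (‖y‖ ^ p)⁻¹ with hf
  have hf0 : ∀ y, 0 ≤ f y := fun y => by positivity
  set T := Metric.ball (0:EuclideanSpace ℝ (Fin d)) η \ U with hT
  have hTball : T ⊆ Metric.ball 0 η := Set.diff_subset
  have hsplit : (T \ Metric.ball 0 δ₀) ∪ (T ∩ Metric.ball 0 δ₀) = T := Set.diff_union_inter _ _
  rw [IntegrableOn, ← hsplit]
  apply MeasureTheory.IntegrableOn.union
  · -- far part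
    apply Measure.integrableOn_of_bounded (M := (δ₀ ^ p)⁻¹)
    · exact ((measure_mono (Set.diff_subset.trans hTball)).trans_lt measure_ball_lt_top).ne
    · exact (measurable_invnorm p).aestronglyMeasurable
    · apply ae_restrict_of_forall_mem
        ((measurableSet_ball.diff (measurableSet_ball.union measurableSet_ball)).diff
          measurableSet_ball)
      intro y hy
      have hny : δ₀ ≤ ‖y‖ := by
        have := hy.2
        simpa [Metric.mem_ball, dist_eq_norm, not_lt] using this
      have h1 : δ₀ ^ p ≤ ‖y‖ ^ p := Real.rpow_le_rpow hδ₀p.le hny hp0.le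
      have h2 : (0:ℝ) < δ₀ ^ p := Real.rpow_pos_of_pos hδ₀p p
      rw [Real.norm_eq_abs, abs_of_nonneg (hf0 y)]
      exact inv_anti₀ h2 h1
  · -- near part: T ∩ ball 0 δ₀
    have hδ₀δ : δ₀ ≤ δ := min_le_left _ _
    set i₀ : Fin d := ⟨d - 1, by omega⟩ with hi₀
    set A := T ∩ Metric.ball (0:EuclideanSpace ℝ (Fin d)) δ₀ with hA
    -- annuli
    set Ann : ℕ → Set (EuclideanSpace ℝ (Fin d)) :=
      fun k => {y | δ₀ / 2 ^ (k+1) < ‖y‖ ∧ ‖y‖ ≤ δ₀ / 2 ^ k} with hAnn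
    have hcover : A ⊆ (⋃ k, A ∩ Ann k) ∪ {0} := by
      intro y hy
      rcases eq_or_ne y 0 with rfl | hy0
      · exact Or.inr rfl
      · left
        have hylt : ‖y‖ < δ₀ := by simpa [Metric.mem_ball, dist_eq_norm] using hy.2
        have hypos : 0 < ‖y‖ := norm_pos_iff.2 hy0
        have hone : (1:ℝ) ≤ δ₀ / ‖y‖ := (one_le_div hypos).2 hylt.le
        obtain ⟨k, h1, h2⟩ := exists_nat_pow_near hone one_lt_two
        refine Set.mem_iUnion.2 ⟨k, hy, ?_, ?_⟩
        · rw [div_lt_iff₀ (by positivity)]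
          rw [div_lt_iff₀ hypos] at h2
          linarith [h2]
        · rw [le_div_iff₀ (by positivity)]
          rw [le_div_iff₀ hypos] at h1
          linarith [h1]
    constructor
    · exact (measurable_invnorm p).aestronglyMeasurable.restrict
    · rw [hasFiniteIntegral_iff_ofReal (Filter.Eventually.of_forall hf0)]
      -- constants
      set q : ℝ := (2:ℝ) ^ (s - 1) with hq
      have hq0 : 0 ≤ q := (Real.rpow_pos_of_pos two_pos _).le
      have hq1 : q < 1 := Real.rpow_lt_one_of_one_lt_of_neg one_lt_two (by linarith [hs.2])
      set K : ℝ := 2 ^ (2*d - 1) * (2:ℝ) ^ s * δ₀ / ((δ₀:ℝ) ^ s * δ) with hK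
      have hK0 : 0 ≤ K := by
        have h1 : (0:ℝ) < (2:ℝ) ^ s := Real.rpow_pos_of_pos two_pos _
        have h2 : (0:ℝ) < (δ₀:ℝ) ^ s := Real.rpow_pos_of_pos hδ₀p _
        positivity
      have hpow2 : ∀ (x y : ℝ), 0 < x → 0 < y →
          (2*x/y)^d * (2*(y/x))^(d-1) = 2^(2*d-1) * x / y := by
        intro x y hx hy
        obtain ⟨m, rfl⟩ : ∃ m, d = m + 1 := ⟨d - 1, by omega⟩
        have h4 : (2*x/y) * (2*(y/x)) = 4 := by field_simp; ring
        have e1 : (2*x/y)^(m+1) * (2*(y/x))^(m+1-1)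
            = (2*x/y) * ((2*x/y) * (2*(y/x)))^m := by
          simp only [Nat.add_sub_cancel, pow_succ, mul_pow]; ring
        rw [e1, h4]
        have e2 : (2:ℝ)^(2*(m+1)-1) = 2 * 4^m := by
          have : 2*(m+1)-1 = 2*m+1 := by omega
          rw [this, pow_succ, pow_mul]; norm_num; ring
        rw [e2]; field_simp
      have key : ∀ k : ℕ, ∫⁻ y in A ∩ Ann k, ENNReal.ofReal (f y) ≤ ENNReal.ofReal (K * q ^ k) := by
        intro k
        have hw : (0:ℝ) < 2^k := by positivity
        set ρ : ℝ := δ₀ / 2 ^ k with hρ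
        have hρ0 : 0 < ρ := by positivity
        set M : ℝ := ((δ₀ / 2 ^ (k+1)) ^ p)⁻¹ with hM
        have hM0 : 0 ≤ M := by positivity
        set c : Fin d → ℝ := fun i => if i = i₀ then ρ^2/(2*δ) else ρ with hc
        have hbox : A ∩ Ann k ⊆ {y | ∀ i, |y i| ≤ c i} := by
          intro y hy i
          have hyU : y ∉ U := hy.1.1.2
          have hyρ : ‖y‖ ≤ ρ := hy.2.2
          rw [hc]
          by_cases hii : i = i₀
          · simp only [if_pos hii]
            have h1 := coord_bound hd hδ (fun h => hyU (Or.inl h)) (fun h => hyU (Or.inr h))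
            have h2 : ‖y‖^2 ≤ ρ^2 := by nlinarith [norm_nonneg y]
            have h3 : ‖y‖^2/(2*δ) ≤ ρ^2/(2*δ) := by gcongr
            rw [hii]
            exact h1.trans h3
          · simp only [if_neg hii]
            exact (abs_coord_le y i).trans hyρ
        have hws : ((2:ℝ)^k) ^ s = q ^ k * 2 ^ k := by
          have h1 : ((2:ℝ)^k : ℝ) = (2:ℝ) ^ (k:ℝ) := (Real.rpow_natCast 2 k).symm
          have h2 : (q:ℝ) ^ k = (2:ℝ) ^ ((s-1)*(k:ℝ)) := by
            rw [← Real.rpow_natCast q k, hq, ← Real.rpow_mul (by norm_num)]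
          rw [h2]
          calc ((2:ℝ)^k) ^ s = ((2:ℝ) ^ (k:ℝ)) ^ s := by rw [← h1]
            _ = (2:ℝ) ^ ((k:ℝ)*s) := (Real.rpow_mul (by norm_num) _ _).symm
            _ = (2:ℝ) ^ ((s-1)*(k:ℝ) + (k:ℝ)) := by
                rw [show (k:ℝ)*s = (s-1)*(k:ℝ) + (k:ℝ) by ring]
            _ = (2:ℝ) ^ ((s-1)*(k:ℝ)) * (2:ℝ) ^ ((k:ℝ)) := Real.rpow_add two_pos _ _
            _ = (2:ℝ) ^ ((s-1)*(k:ℝ)) * (2:ℝ) ^ k := by rw [Real.rpow_natCast]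
        have hMrw : M = (2 * 2^k / δ₀) ^ p := by
          rw [hM, pow_succ, ← Real.inv_rpow (by positivity), inv_div]
          ring_nf
        have hreal : M * (ρ^2/δ * (2*ρ)^(d-1)) = K * q^k := by
          have e1 : M * (ρ^2/δ * (2*ρ)^(d-1))
              = ((2*2^k/δ₀)^d * (2*(δ₀/2^k))^(d-1)) * ((2*2^k/δ₀)^s * (ρ^2/δ)) := by
            rw [hMrw, hp, Real.rpow_add (by positivity), Real.rpow_natCast, hρ]
            ring
          rw [e1, hpow2 (2^k) δ₀ hw hδ₀p]
          have e2 : (2*2^k/δ₀)^s = 2^s * ((2:ℝ)^k)^s / δ₀^s := by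
            rw [Real.div_rpow (by positivity) hδ₀p.le,
              Real.mul_rpow (by norm_num) hw.le]
          rw [e2, hws, hK, hρ]
          have hB : (0:ℝ) < (δ₀:ℝ)^s := Real.rpow_pos_of_pos hδ₀p _
          field_simp
        calc ∫⁻ y in A ∩ Ann k, ENNReal.ofReal (f y)
            ≤ ∫⁻ _ in A ∩ Ann k, ENNReal.ofReal M := by
              apply setLIntegral_mono measurable_const
              intro y hy
              apply ENNReal.ofReal_le_ofReal
              have h1 : δ₀ / 2^(k+1) ≤ ‖y‖ := (hy.2.1).le
              have h2 : (0:ℝ) < δ₀ / 2^(k+1) := by positivity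
              exact inv_anti₀ (Real.rpow_pos_of_pos h2 p)
                (Real.rpow_le_rpow h2.le h1 hp0.le)
          _ = ENNReal.ofReal M * volume (A ∩ Ann k) := setLIntegral_const _ _
          _ ≤ ENNReal.ofReal M * volume {y : EuclideanSpace ℝ (Fin d) | ∀ i, |y i| ≤ c i} := by
              exact mul_le_mul_right (measure_mono hbox) _
          _ = ENNReal.ofReal M * ∏ i, ENNReal.ofReal (2 * c i) := by rw [volume_box]
          _ = ENNReal.ofReal (M * (ρ^2/δ * (2*ρ)^(d-1))) := by
              have hprod : ∏ i, ENNReal.ofReal (2 * c i)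
                  = ENNReal.ofReal (ρ^2/δ) * ENNReal.ofReal (2*ρ) ^ (d-1) := by
                rw [← Finset.mul_prod_erase Finset.univ _ (Finset.mem_univ i₀)]
                congr 1
                · rw [hc]; simp only [if_pos rfl, ↓reduceIte]
                  congr 1
                  field_simp
                · rw [Finset.prod_congr rfl (fun i hi => ?_), Finset.prod_const,
                    Finset.card_erase_of_mem (Finset.mem_univ _), Finset.card_univ,
                    Fintype.card_fin]
                  rw [hc]; simp only [if_neg (Finset.mem_erase.1 hi).1]
              rw [hprod, ENNReal.ofReal_mul hM0, ← ENNReal.ofReal_pow (by positivity),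
                ← ENNReal.ofReal_mul (by positivity)]
          _ ≤ ENNReal.ofReal (K * q ^ k) := by rw [hreal]
      calc ∫⁻ y in A, ENNReal.ofReal (f y)
          ≤ ∫⁻ y in (⋃ k, A ∩ Ann k) ∪ {0}, ENNReal.ofReal (f y) :=
            lintegral_mono_set hcover
        _ ≤ (∫⁻ y in ⋃ k, A ∩ Ann k, ENNReal.ofReal (f y))
            + ∫⁻ y in ({0} : Set (EuclideanSpace ℝ (Fin d))), ENNReal.ofReal (f y) :=
            lintegral_union_le _ _ _
        _ ≤ (∑' k, ∫⁻ y in A ∩ Ann k, ENNReal.ofReal (f y)) + 0 := by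
            gcongr
            · exact lintegral_iUnion_le _ _
            · rw [setLIntegral_measure_zero]
              exact measure_singleton 0
        _ ≤ (∑' k, ENNReal.ofReal (K * q ^ k)) + 0 := by
            gcongr with k
            exact key k
        _ = ENNReal.ofReal K * ∑' k, ENNReal.ofReal q ^ k := by
            rw [add_zero]
            have he : ∀ k:ℕ, ENNReal.ofReal (K * q ^ k)
                = ENNReal.ofReal K * ENNReal.ofReal q ^ k := fun k => by
              rw [ENNReal.ofReal_mul hK0, ENNReal.ofReal_pow hq0]
            simp_rw [he]
            rw [ENNReal.tsum_mul_left]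
        _ < ⊤ := by
            rw [ENNReal.tsum_geometric]
            apply ENNReal.mul_lt_top ENNReal.ofReal_lt_top
            rw [lt_top_iff_ne_top, Ne, ENNReal.inv_eq_top, tsub_eq_zero_iff_le, not_le]
            exact ENNReal.ofReal_lt_one.2 hq1



lemma measurable_chiDiff {d : ℕ} {E : Set (EuclideanSpace ℝ (Fin d))} (hE : MeasurableSet E) :
    Measurable (chiDiff E) :=
  (measurable_const.indicator hE.compl).sub (measurable_const.indicator hE)

lemma abs_chiDiff_le {d : ℕ} (E : Set (EuclideanSpace ℝ (Fin d))) (y : EuclideanSpace ℝ (Fin d)) :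
    |chiDiff E y| ≤ 1 := by
  unfold chiDiff
  by_cases hy : y ∈ E <;> simp [Set.indicator_apply, hy]

lemma chiDiff_of_mem {d : ℕ} {E : Set (EuclideanSpace ℝ (Fin d))} {y : EuclideanSpace ℝ (Fin d)}
    (hy : y ∈ E) : chiDiff E y = -1 := by
  simp [chiDiff, Set.indicator_apply, hy]

lemma chiDiff_of_not_mem {d : ℕ} {E : Set (EuclideanSpace ℝ (Fin d))} {y : EuclideanSpace ℝ (Fin d)}
    (hy : y ∉ E) : chiDiff E y = 1 := by
  simp [chiDiff, Set.indicator_apply, hy]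

/-- with tangent balls `B_δ(-δe_d) ⊆ E`, `B_δ(δe_d) ⊆ Eᶜ`, the principal
value over `B_η` exists and equals the integral outside the two tangent balls. -/
theorem stmt_3 (d : ℕ) (hd : 0 < d) (E : Set (EuclideanSpace ℝ (Fin d)))
    (hE : MeasurableSet E) (δ : ℝ) (hδ : 0 < δ)
    (hin : Metric.ball (-(δ • ed d)) δ ⊆ E)
    (hout : Metric.ball (δ • ed d) δ ⊆ Eᶜ)
    (s : ℝ) (hs : s ∈ Set.Ico (0:ℝ) 1) (η : ℝ) (hη : 0 < η) :
    Tendsto (fun r : ℝ =>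
        ∫ y in Metric.ball (0 : EuclideanSpace ℝ (Fin d)) η \ Metric.ball 0 r,
          chiDiff E y / ‖y‖ ^ ((d:ℝ) + s))
      (nhdsWithin 0 (Set.Ioi 0))
      (nhds (∫ y in Metric.ball (0 : EuclideanSpace ℝ (Fin d)) η \
          (Metric.ball (-(δ • ed d)) δ ∪ Metric.ball (δ • ed d) δ),
        chiDiff E y / ‖y‖ ^ ((d:ℝ) + s))) := by
  have hnt : Nontrivial (EuclideanSpace ℝ (Fin d)) := by
    refine ⟨⟨0, ed d, fun h => ?_⟩⟩
    have := norm_ed hd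
    rw [← h] at this; simp at this
  obtain ⟨hs0, hs1⟩ := hs
  set p : ℝ := (d:ℝ) + s with hp
  have hd1 : (1:ℝ) ≤ (d:ℝ) := by exact_mod_cast hd
  have hp0 : 0 < p := by simp only [hp]; linarith
  set g : EuclideanSpace ℝ (Fin d) → ℝ := fun y => chiDiff E y / ‖y‖ ^ p with hg
  set h : EuclideanSpace ℝ (Fin d) → ℝ := fun y => (‖y‖ ^ p)⁻¹ with hh
  have hgm : Measurable g := (measurable_chiDiff hE).div (measurable_norm.pow_const p)
  have habs : ∀ y, ‖g y‖ ≤ ‖h y‖ := by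
    intro y
    have hD : (0:ℝ) ≤ ‖y‖ ^ p := by positivity
    rcases hD.eq_or_lt with hD0 | hD0
    · simp [hg, hh, ← hD0]
    · simp only [hg, hh, Real.norm_eq_abs, abs_div, abs_of_pos hD0, abs_of_pos (inv_pos.2 hD0)]
      calc |chiDiff E y| / ‖y‖ ^ p ≤ 1 / ‖y‖ ^ p := by
            gcongr
            exact abs_chiDiff_le E y
        _ = (‖y‖ ^ p)⁻¹ := one_div _
  set Bm := Metric.ball (-(δ • ed d)) δ with hBm
  set Bp := Metric.ball (δ • ed d) δ with hBp
  have hBdisj : Disjoint Bm Bp := by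
    apply ball_disjoint_ball
    rw [dist_eq_norm]
    have he : -(δ • ed d) - δ • ed d = -((2*δ) • ed d) := by
      rw [two_mul, add_smul]; abel
    rw [he, norm_neg, norm_smul, norm_ed hd, Real.norm_eq_abs,
      abs_of_pos (by positivity), mul_one]
    linarith
  set U := Bm ∪ Bp with hU2
  have hUm : MeasurableSet U := measurableSet_ball.union measurableSet_ball
  set T := Metric.ball (0:EuclideanSpace ℝ (Fin d)) η \ U with hT
  have hTm : MeasurableSet T := measurableSet_ball.diff hUm
  have hTint : IntegrableOn g T := by
    apply Integrable.mono (integrableOn_outside hd hδ hη ⟨hs0, hs1⟩)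
      hgm.aestronglyMeasurable.restrict
    exact Filter.Eventually.of_forall habs
  have hmain : ∀ r ∈ Set.Ioo (0:ℝ) η,
      (∫ y in Metric.ball (0:EuclideanSpace ℝ (Fin d)) η \ Metric.ball 0 r, g y)
        = (∫ y in T, g y) - ∫ y in T ∩ Metric.ball 0 r, g y := by
    intro r hr
    set S := Metric.ball (0:EuclideanSpace ℝ (Fin d)) η \ Metric.ball 0 r with hS
    have hSm : MeasurableSet S := measurableSet_ball.diff measurableSet_ball
    have hSneg : ∀ y : EuclideanSpace ℝ (Fin d), -y ∈ S ↔ y ∈ S := by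
      intro y
      simp [hS, Metric.mem_ball, dist_eq_norm]
    have hBneg : ∀ y : EuclideanSpace ℝ (Fin d), -y ∈ Bp ↔ y ∈ Bm := by
      intro y
      rw [hBp, hBm, Metric.mem_ball, Metric.mem_ball, dist_eq_norm, dist_eq_norm]
      constructor <;> intro hy
      · rwa [show y - -(δ • ed d) = -(-y - δ • ed d) by abel, norm_neg]
      · rwa [show -y - δ • ed d = -(y - -(δ • ed d)) by abel, norm_neg]
    have hhS : IntegrableOn h S := by
      apply Measure.integrableOn_of_bounded (M := (r ^ p)⁻¹)
      · exact ((measure_mono Set.diff_subset).trans_lt measure_ball_lt_top).ne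
      · exact (measurable_invnorm p).aestronglyMeasurable
      · apply ae_restrict_of_forall_mem hSm
        intro y hy
        have hry : r ≤ ‖y‖ := by
          simpa [Metric.mem_ball, dist_eq_norm, not_lt] using hy.2
        rw [hh, Real.norm_eq_abs]
        simp only
        rw [abs_of_nonneg (by positivity)]
        exact inv_anti₀ (Real.rpow_pos_of_pos hr.1 p)
          (Real.rpow_le_rpow hr.1.le hry hp0.le)
    have hgS : IntegrableOn g S :=
      Integrable.mono hhS hgm.aestronglyMeasurable.restrict (Filter.Eventually.of_forall habs)
    have hswap : ∫ y in S ∩ Bp, h y = ∫ y in S ∩ Bm, h y := by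
      have hI : ∀ y, (S ∩ Bp).indicator h (-y) = (S ∩ Bm).indicator h y := by
        intro y
        by_cases hy : y ∈ S ∩ Bm
        · rw [Set.indicator_of_mem hy, Set.indicator_of_mem (show -y ∈ S ∩ Bp from ⟨(hSneg y).2 hy.1, (hBneg y).2 hy.2⟩)]
          rw [hh]; simp
        · rw [Set.indicator_of_notMem hy, Set.indicator_of_notMem ?_]
          intro hc
          exact hy ⟨(hSneg y).1 hc.1, (hBneg y).1 hc.2⟩
      rw [← integral_indicator (hSm.inter measurableSet_ball),
          ← integral_indicator (hSm.inter measurableSet_ball),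
          ← integral_neg_eq_self ((S ∩ Bp).indicator h) volume]
      exact integral_congr_ae (Filter.Eventually.of_forall hI)
    have hvalp : ∫ y in S ∩ Bp, g y = ∫ y in S ∩ Bp, h y := by
      apply setIntegral_congr_fun (hSm.inter measurableSet_ball)
      intro y hy
      have hyE : y ∉ E := hout hy.2
      simp only [hg, hh]
      rw [chiDiff_of_not_mem hyE, one_div]
    have hvalm : ∫ y in S ∩ Bm, g y = - ∫ y in S ∩ Bm, h y := by
      rw [← integral_neg]
      apply setIntegral_congr_fun (hSm.inter measurableSet_ball)
      intro y hy
      have hyE : y ∈ E := hin hy.2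
      simp only [hg, hh]
      rw [chiDiff_of_mem hyE, neg_div, one_div]
    have hzero : ∫ y in S ∩ U, g y = 0 := by
      have hSU : S ∩ U = (S ∩ Bm) ∪ (S ∩ Bp) := by
        rw [hU2, Set.inter_union_distrib_left]
      rw [hSU, setIntegral_union
        (hBdisj.mono Set.inter_subset_right Set.inter_subset_right)
        (hSm.inter measurableSet_ball)
        (hgS.mono_set Set.inter_subset_left) (hgS.mono_set Set.inter_subset_left),
        hvalm, hvalp, hswap]
      ring
    have hdiffU : S \ U = T \ Metric.ball 0 r := by
      rw [hS, hT, Set.diff_diff_comm]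
    have h1 : ∫ y in (S \ U) ∪ (S ∩ U), g y
        = (∫ y in S \ U, g y) + ∫ y in S ∩ U, g y :=
      setIntegral_union Set.disjoint_sdiff_inter (hSm.inter hUm)
        (hgS.mono_set Set.diff_subset) (hgS.mono_set Set.inter_subset_left)
    rw [Set.diff_union_inter] at h1
    have h2 : ∫ y in (T \ Metric.ball 0 r) ∪ (T ∩ Metric.ball 0 r), g y
        = (∫ y in T \ Metric.ball 0 r, g y) + ∫ y in T ∩ Metric.ball 0 r, g y :=
      setIntegral_union Set.disjoint_sdiff_inter (hTm.inter measurableSet_ball)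
        (hTint.mono_set Set.diff_subset) (hTint.mono_set Set.inter_subset_left)
    rw [Set.diff_union_inter] at h2
    rw [h1, hzero, add_zero, hdiffU]
    linarith [h2]
  have hball : Tendsto (fun r : ℝ => volume (Metric.ball (0:EuclideanSpace ℝ (Fin d)) r))
      (𝓝[>] (0:ℝ)) (𝓝 0) := by
    have h2 : Tendsto (fun r : ℝ => r ^ d) (𝓝[>] (0:ℝ)) (𝓝 0) := by
      have h3 := (continuous_pow d).tendsto (0:ℝ)
      rw [zero_pow (by omega : d ≠ 0)] at h3
      exact h3.mono_left nhdsWithin_le_nhds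
    have h4 : Tendsto (fun r : ℝ => ENNReal.ofReal (r ^ d)) (𝓝[>] (0:ℝ)) (𝓝 0) := by
      have h5 := ENNReal.tendsto_ofReal h2
      simpa using h5
    have h6 := ENNReal.Tendsto.mul_const h4
      (Or.inr (measure_ball_lt_top (μ := (volume : Measure (EuclideanSpace ℝ (Fin d)))) (x := 0) (r := 1)).ne)
    rw [zero_mul] at h6
    refine Filter.Tendsto.congr' ?_ h6
    filter_upwards [self_mem_nhdsWithin] with r hr
    rw [Measure.addHaar_ball volume (0:EuclideanSpace ℝ (Fin d)) (le_of_lt hr),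
      finrank_euclideanSpace_fin]
  have hlim : Tendsto (fun r : ℝ => ∫ y in T ∩ Metric.ball 0 r, g y) (𝓝[>] (0:ℝ)) (𝓝 0) := by
    have hind : Integrable (T.indicator g) := (integrable_indicator_iff hTm).2 hTint
    have h6 := hind.tendsto_setIntegral_nhds_zero hball
    apply h6.congr
    intro r
    rw [setIntegral_indicator hTm, Set.inter_comm]
  have hfinal := (tendsto_const_nhds (x := ∫ y in T, g y)
    (f := 𝓝[>] (0:ℝ))).sub hlim
  rw [sub_zero] at hfinal
  refine Filter.Tendsto.congr' ?_ hfinal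
  filter_upwards [Ioo_mem_nhdsGT_of_mem ⟨le_refl 0, hη⟩] with r hr
  exact (hmain r hr).symm
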